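/- Let C = ⟨(b|0), (ℓ | fh + 2f)⟩ ⊆ R_{α,β} be a Z_2Z_4-additive cyclic code with fhg = x^β - 1, β odd. Then the set S_1 ∪ S_2 ∪ S_3, where S_1 = {x^i⋆(b|0) : 0 ≤ i ≤ α - deg b - 1}, S_2 = {x^i⋆(ℓ | fh+2f) : 0 ≤ i ≤ deg g - 1}, S_3 = {x^i⋆(ℓg | 2fg) : 0 ≤ i ≤ deg h - 1}, spans C as a Z_4-module, and |C| = 2^{α - deg b} · 4^{deg g} · 2^{deg h}. -/

import Mathlib

open Polynomial

/-- Reduction modulo 2, `Z₄[x] → Z₂[x]`. -/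
noncomputable def red42 : Polynomial (ZMod 4) →+* Polynomial (ZMod 2) :=
  Polynomial.mapRingHom (ZMod.castHom (show 2 ∣ 4 by norm_num) (ZMod 2))

/-- The polynomial `∑ uᵢ xⁱ` associated to a binary vector. -/
noncomputable def polyOf2 {α : ℕ} (u : Fin α → ZMod 2) : Polynomial (ZMod 2) :=
  ∑ i, C (u i) * X ^ (i : ℕ)

/-- The polynomial `∑ u'ⱼ xʲ` associated to a quaternary vector. -/
noncomputable def polyOf4 {β : ℕ} (u : Fin β → ZMod 4) : Polynomial (ZMod 4) :=
  ∑ j, C (u j) * X ^ (j : ℕ)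

/-- Membership in the `Z₂Z₄`-additive cyclic code `C = ⟨(b|0), (ℓ|fh+2f)⟩`,
the `Z₄[x]`-submodule of `Z₂[x]/(x^α-1) × Z₄[x]/(x^β-1)` generated by `(b|0)`
and `(ℓ | fh+2f)`, expressed on vectors via their associated polynomials. -/
def memC {α β : ℕ} (b ℓ : Polynomial (ZMod 2)) (q : Polynomial (ZMod 4))
    (z : (Fin α → ZMod 2) × (Fin β → ZMod 4)) : Prop :=
  ∃ lam mu : Polynomial (ZMod 4),
    (X ^ α - 1 : Polynomial (ZMod 2)) ∣
        polyOf2 z.1 - (red42 lam * b + red42 mu * ℓ) ∧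
    (X ^ β - 1 : Polynomial (ZMod 4)) ∣ polyOf4 z.2 - mu * q

section generic
variable {R S : Type*} [CommRing R] [CommRing S]

lemma polyOfGen_degree {n : ℕ} (u : Fin n → R) :
    (∑ i, C (u i) * X ^ (i : ℕ)).degree < (n : WithBot ℕ) := by
  apply lt_of_le_of_lt (degree_sum_le _ _)
  rw [Finset.sup_lt_iff (by exact WithBot.bot_lt_coe n)]
  intro i _
  exact lt_of_le_of_lt (degree_C_mul_X_pow_le _ _) (by exact_mod_cast i.2)

lemma polyOfGen_coeff {n : ℕ} (u : Fin n → R) (i : Fin n) :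
    (∑ j, C (u j) * X ^ (j : ℕ)).coeff i = u i := by
  rw [finset_sum_coeff]
  simp only [coeff_C_mul, coeff_X_pow]
  rw [Finset.sum_eq_single i]
  · simp
  · intro j _ hj
    rw [if_neg (fun hij => hj (Fin.val_injective hij).symm), mul_zero]
  · simp

lemma polyOfGen_eq {n : ℕ} (p : R[X]) (hp : p.degree < (n : WithBot ℕ)) :
    (∑ i : Fin n, C (p.coeff i) * X ^ (i : ℕ)) = p := by
  rcases eq_or_ne p 0 with rfl | h0
  · simp
  have : p.natDegree < n := by
    rwa [← Polynomial.natDegree_lt_iff_degree_lt h0] at hp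
  conv_rhs => rw [p.as_sum_range' n this]
  rw [Fin.sum_univ_eq_sum_range (fun i => C (p.coeff i) * X ^ i)]
  simp [C_mul_X_pow_eq_monomial]

lemma eq_of_coeff_eq {n : ℕ} (p P : R[X]) (hp : p.degree < (n : WithBot ℕ))
    (hP : P.degree < (n : WithBot ℕ)) (hc : ∀ i : Fin n, p.coeff i = P.coeff i) : p = P := by
  rw [← polyOfGen_eq p hp, ← polyOfGen_eq P hP]
  exact Finset.sum_congr rfl fun i _ => by rw [hc i]

/-- coefficientwise map -/
noncomputable def cmap (σ : R → S) (p : R[X]) : S[X] :=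
  ∑ i ∈ p.support, C (σ (p.coeff i)) * X ^ i

lemma cmap_coeff {σ : R → S} (hσ : σ 0 = 0) (p : R[X]) (n : ℕ) :
    (cmap σ p).coeff n = σ (p.coeff n) := by
  rw [cmap, finset_sum_coeff]
  simp only [coeff_C_mul, coeff_X_pow]
  rw [Finset.sum_eq_single n]
  · rcases em (n ∈ p.support) with hn | hn
    · simp
    · simp only [notMem_support_iff] at hn
      simp [hn, hσ]
  · intro i _ hin
    simp [Ne.symm hin]
  · intro hn
    simp only [notMem_support_iff] at hn
    simp [hn, hσ]

lemma cmap_degree (σ : R → S) (p : R[X]) : (cmap σ p).degree ≤ p.degree := by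
  apply le_trans (degree_sum_le _ _)
  rw [Finset.sup_le_iff]
  intro i hi
  exact le_trans (degree_C_mul_X_pow_le _ _) (le_degree_of_ne_zero (mem_support_iff.mp hi))

lemma monic_dvd_eq_zero {m w : R[X]} [Nontrivial R] (hm : m.Monic) (hd : m ∣ w)
    (hlt : w.degree < m.degree) : w = 0 := by
  obtain ⟨u, rfl⟩ := hd
  rcases eq_or_ne u 0 with rfl | hu
  · simp
  rw [mul_comm, hm.degree_mul] at hlt
  exact absurd hlt (not_lt.mpr (le_add_of_nonneg_left (zero_le_degree_iff.mpr hu)))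

lemma mod_unique {m p P : R[X]} [Nontrivial R] (hm : m.Monic) (hdeg : p.degree < m.degree)
    (hdvd : m ∣ p - P) : p = P %ₘ m := by
  have h2 : m ∣ p - P %ₘ m := by
    have h1 : P %ₘ m = P - m * (P /ₘ m) := by
      rw [eq_sub_iff_add_eq, modByMonic_add_div P m]
    rw [h1, show p - (P - m * (P /ₘ m)) = (p - P) + m * (P /ₘ m) by ring]
    exact dvd_add hdvd (Dvd.intro _ rfl)
  have h3 : (p - P %ₘ m).degree < m.degree :=
    lt_of_le_of_lt (degree_sub_le _ _) (max_lt hdeg (degree_modByMonic_lt P hm))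
  exact sub_eq_zero.mp (monic_dvd_eq_zero hm h2 h3)

end generic

noncomputable abbrev c24 : ZMod 4 →+* ZMod 2 := ZMod.castHom (show 2 ∣ 4 by norm_num) (ZMod 2)

def lift24 : ZMod 2 → ZMod 4 := fun x => if x = 0 then 0 else 1
def half4 : ZMod 4 → ZMod 4 := fun x => if x = 2 then 1 else 0

lemma c24_lift24 (x : ZMod 2) : c24 (lift24 x) = x := by revert x; decide
lemma two_mul_half4 (x : ZMod 4) (hx : c24 x = 0) : 2 * half4 x = x := by revert x; decide
lemma c24_zero_of_two_mul (x : ZMod 4) (hx : 2 * x = 0) : c24 x = 0 := by revert x; decide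
lemma two_lift (x : ZMod 4) : 2 * lift24 (c24 x) = 2 * x := by revert x; decide

lemma red42_coeff (p : Polynomial (ZMod 4)) (n : ℕ) : (red42 p).coeff n = c24 (p.coeff n) :=
  coeff_map _ _

lemma red42_X_pow_sub_one (m : ℕ) : red42 (X ^ m - 1) = X ^ m - 1 := by
  simp [red42, Polynomial.map_sub, Polynomial.map_pow, Polynomial.map_one, Polynomial.map_X]

lemma twoC4 : (2 : Polynomial (ZMod 4)) = C 2 := by
  rw [show ((2 : ZMod 4)) = ((2 : ℕ) : ZMod 4) by norm_num, C_eq_natCast]; norm_num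

lemma fourP0 : (4 : Polynomial (ZMod 4)) = 0 := by
  rw [show ((4 : Polynomial (ZMod 4))) = ((4 : ℕ) : Polynomial (ZMod 4)) by norm_num,
    ← C_eq_natCast]
  norm_num
  rfl

lemma red42_two : red42 2 = 0 := by
  rw [twoC4, red42]
  simp only [coe_mapRingHom, map_C]
  rw [show (c24 2 : ZMod 2) = 0 by decide, map_zero]

lemma red42_cmap_lift (A : Polynomial (ZMod 2)) : red42 (cmap lift24 A) = A := by
  ext n
  rw [red42_coeff, cmap_coeff rfl, c24_lift24]

lemma exists_half (P : Polynomial (ZMod 4)) (hP : red42 P = 0) :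
    ∃ Q : Polynomial (ZMod 4), P = 2 * Q ∧ Q.degree ≤ P.degree := by
  refine ⟨cmap half4 P, ?_, cmap_degree _ _⟩
  ext n
  rw [twoC4, coeff_C_mul, cmap_coeff rfl]
  have h0 : c24 (P.coeff n) = 0 := by
    have := congrArg (fun p => Polynomial.coeff p n) hP
    simpa [red42_coeff] using this
  exact (two_mul_half4 _ h0).symm

lemma red42_zero_of_two_mul (W : Polynomial (ZMod 4)) (hW : 2 * W = 0) : red42 W = 0 := by
  ext n
  rw [red42_coeff]
  have := congrArg (fun p => Polynomial.coeff p n) hW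
  simp only [twoC4, coeff_C_mul, coeff_zero] at this
  simpa using c24_zero_of_two_mul _ this

lemma coprime_hg (β : ℕ) (hβ : Odd β) (f g h : Polynomial (ZMod 4))
    (hfac : f * h * g = X ^ β - 1) : IsCoprime (red42 h) (red42 g) := by
  have hβ2 : ((β : ZMod 2)) ≠ 0 := by
    rcases hβ with ⟨k, rfl⟩; push_cast
    simp [show ((2:ZMod 2)) = 0 from rfl]
  have hsep : (X ^ β - 1 : Polynomial (ZMod 2)).Separable := by
    simpa using separable_X_pow_sub_C (1 : ZMod 2) hβ2 one_ne_zero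
  have hred : red42 f * (red42 h * red42 g) = X ^ β - 1 := by
    rw [← map_mul, ← map_mul, show f * (h * g) = f * h * g by ring, hfac,
      red42_X_pow_sub_one]
  rw [← hred] at hsep
  exact hsep.of_mul_right.isCoprime

lemma Bfacts (α : ℕ) (hα : 0 < α) (b : Polynomial (ZMod 2)) (hb : b ∣ X ^ α - 1)
    (hb0 : b ≠ 0) : ∃ B : Polynomial (ZMod 2), X ^ α - 1 = b * B ∧ B.Monic ∧
      B.natDegree = α - b.natDegree ∧ b.natDegree ≤ α := by
  obtain ⟨B, hB⟩ := hb
  have hm : (X ^ α - 1 : Polynomial (ZMod 2)).Monic := by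
    simpa using monic_X_pow_sub_C (1 : ZMod 2) hα.ne'
  have hB0 : B ≠ 0 := by
    rintro rfl
    rw [mul_zero] at hB
    exact hm.ne_zero hB
  have hBm : B.Monic := by
    have h1 : b.leadingCoeff * B.leadingCoeff = 1 := by
      rw [← leadingCoeff_mul, ← hB, hm.leadingCoeff]
    have h2 : ∀ x y : ZMod 2, x * y = 1 → y = 1 := by decide
    exact h2 _ _ h1
  have hdeg : b.natDegree + B.natDegree = α := by
    have h3 := natDegree_mul hb0 hB0
    rw [← hB] at h3
    rw [show (X ^ α - 1 : Polynomial (ZMod 2)) = X ^ α - C 1 by simp,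
      natDegree_X_pow_sub_C] at h3
    omega
  exact ⟨B, hB, hBm, by omega, by omega⟩

lemma normalizeRep {α β : ℕ} (hα : 0 < α)
    (f g h : Polynomial (ZMod 4)) (hg : g.Monic) (hh : h.Monic)
    (hfac : f * h * g = X ^ β - 1)
    (b ℓ : Polynomial (ZMod 2)) (hb : b ∣ X ^ α - 1) (hb0 : b ≠ 0)
    (hdvd : b ∣ red42 (h * g) * ℓ) (lam mu : Polynomial (ZMod 4)) :
    ∃ A4 Cc E4 : Polynomial (ZMod 4),
      A4.degree < ((α - b.natDegree : ℕ) : WithBot ℕ) ∧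
      Cc.degree < (g.natDegree : WithBot ℕ) ∧
      E4.degree < (h.natDegree : WithBot ℕ) ∧
      (X ^ α - 1 : Polynomial (ZMod 2)) ∣
        (red42 lam * b + red42 mu * ℓ) -
          (red42 A4 * b + red42 Cc * ℓ + red42 E4 * (ℓ * red42 g)) ∧
      (X ^ β - 1 : Polynomial (ZMod 4)) ∣
        mu * (f * h + 2 * f) - (Cc * (f * h + 2 * f) + E4 * (2 * f * g)) := by
  haveI : Nontrivial (ZMod 4) := ⟨0, 1, by decide⟩
  obtain ⟨B, hB, hBm, hBdeg, hble⟩ := Bfacts α hα b hb hb0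
  obtain ⟨w, hw⟩ := hdvd
  rw [map_mul] at hw
  set c := mu %ₘ g with hc
  set s := mu /ₘ g with hsdef
  set r := s %ₘ h with hrdef
  set t := s /ₘ h with htdef
  have hmu : c + g * s = mu := modByMonic_add_div mu g
  have hs : r + h * t = s := modByMonic_add_div s h
  set Λ := red42 lam + red42 t * w with hΛ
  set A := Λ %ₘ B with hAdef
  have hAB : A + B * (Λ /ₘ B) = Λ := modByMonic_add_div Λ B
  have e1 : red42 c + red42 g * red42 s = red42 mu := by
    have := congrArg red42 hmu; simpa [map_add, map_mul] using this
  have e2 : red42 r + red42 h * red42 t = red42 s := by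
    have := congrArg red42 hs; simpa [map_add, map_mul] using this
  refine ⟨cmap lift24 A, c, r, ?_, ?_, ?_, ?_, ?_⟩
  · calc (cmap lift24 A).degree ≤ A.degree := cmap_degree _ _
      _ < B.degree := degree_modByMonic_lt Λ hBm
      _ = _ := by rw [degree_eq_natDegree hBm.ne_zero, hBdeg]
  · calc c.degree < g.degree := degree_modByMonic_lt mu hg
      _ = _ := degree_eq_natDegree hg.ne_zero
  · calc r.degree < h.degree := degree_modByMonic_lt s hh
      _ = _ := degree_eq_natDegree hh.ne_zero
  · refine ⟨Λ /ₘ B, ?_⟩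
    have hA4 : red42 (cmap lift24 A) = A := red42_cmap_lift A
    linear_combination (-ℓ) * e1 + (-(ℓ * red42 g)) * e2 + red42 t * hw + (-b) * hA4 +
      (-b) * hAB + (-b) * hΛ + (-(Λ /ₘ B)) * hB
  · refine ⟨s + 2 * t, ?_⟩
    linear_combination (-(f * h + 2 * f)) * hmu + (-(2 * f * g)) * hs + (s + 2 * t) * hfac

lemma injRep {α β : ℕ} (hα : 0 < α) (hβ : Odd β)
    (f g h : Polynomial (ZMod 4)) (hf : f.Monic) (hg : g.Monic) (hh : h.Monic)
    (hfac : f * h * g = X ^ β - 1)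
    (b ℓ : Polynomial (ZMod 2)) (hb : b ∣ X ^ α - 1) (hb0 : b ≠ 0)
    (A : Polynomial (ZMod 2)) (Cc E4 : Polynomial (ZMod 4))
    (hA : A.degree < ((α - b.natDegree : ℕ) : WithBot ℕ))
    (hC : Cc.degree < (g.natDegree : WithBot ℕ))
    (hE : E4.degree < (h.natDegree : WithBot ℕ))
    (h2 : (X ^ α - 1 : Polynomial (ZMod 2)) ∣
      (A * b + red42 Cc * ℓ + red42 E4 * (ℓ * red42 g)))
    (h4 : (X ^ β - 1 : Polynomial (ZMod 4)) ∣ (Cc * (f * h + 2 * f) + E4 * (2 * f * g))) :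
    A = 0 ∧ Cc = 0 ∧ red42 E4 = 0 := by
  haveI : Nontrivial (ZMod 4) := ⟨0, 1, by decide⟩
  obtain ⟨B, hB, hBm, hBdeg, hble⟩ := Bfacts α hα b hb hb0
  obtain ⟨m, hm⟩ := h4
  have hcop := coprime_hg β hβ f g h hfac
  have hrh : (red42 h).Monic := hh.map _
  have hrg : (red42 g).Monic := hg.map _
  have hrhdeg : (red42 h).natDegree = h.natDegree := hh.natDegree_map _
  have hrgdeg : (red42 g).natDegree = g.natDegree := hg.natDegree_map _
  -- step 1 : cancel f
  have key : Cc * h + 2 * Cc + E4 * (2 * g) = h * g * m := by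
    have hf0 : f * (Cc * h + 2 * Cc + E4 * (2 * g) - h * g * m) = 0 := by
      linear_combination hm - m * hfac
    exact sub_eq_zero.mp (hf.mul_right_eq_zero_iff.mp hf0)
  -- step 2 : reduce mod 2 to kill (Cc mod 2)
  have keyred : red42 Cc * red42 h = red42 h * red42 g * red42 m := by
    have hk := congrArg red42 key
    simpa [map_add, map_mul, red42_two] using hk
  have hrh0 : red42 h ≠ 0 := hrh.ne_zero
  have hCgm : red42 Cc = red42 g * red42 m := by
    apply mul_left_cancel₀ hrh0
    linear_combination keyred
  have hCdeg : (red42 Cc).degree < (red42 g).degree := by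
    calc (red42 Cc).degree ≤ Cc.degree := degree_map_le
      _ < (g.natDegree : WithBot ℕ) := hC
      _ = (red42 g).degree := by rw [degree_eq_natDegree hrg.ne_zero, hrgdeg]
  have hrm0 : red42 m = 0 := by
    by_contra hne
    rw [hCgm, mul_comm, hrg.degree_mul] at hCdeg
    exact absurd hCdeg (not_lt.mpr (le_add_of_nonneg_left (zero_le_degree_iff.mpr hne)))
  have hrc0 : red42 Cc = 0 := by rw [hCgm, hrm0, mul_zero]
  obtain ⟨Cc', hCc', hCc'deg⟩ := exists_half Cc hrc0
  obtain ⟨m', hm', _⟩ := exists_half m hrm0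
  -- step 3 : divide by 2
  have key2 : 2 * (Cc' * h + E4 * g - h * g * m') = 0 := by
    linear_combination key + (-h - 2) * hCc' + (h * g) * hm' - Cc' * fourP0
  have keyr2 : red42 Cc' * red42 h + red42 E4 * red42 g = red42 h * red42 g * red42 m' := by
    have hk := red42_zero_of_two_mul _ key2
    have hk2 := congrArg (fun p => p) hk
    simp only [map_sub, map_add, map_mul] at hk
    linear_combination hk
  -- step 4 : E4 mod 2 vanishes
  have hEdvd : red42 h ∣ red42 E4 * red42 g :=
    ⟨red42 g * red42 m' - red42 Cc', by linear_combination keyr2⟩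
  have hE0 : red42 E4 = 0 := by
    apply eq_zero_of_dvd_of_degree_lt (hcop.dvd_of_dvd_mul_right hEdvd)
    calc (red42 E4).degree ≤ E4.degree := degree_map_le
      _ < (h.natDegree : WithBot ℕ) := hE
      _ = (red42 h).degree := by rw [degree_eq_natDegree hrh.ne_zero, hrhdeg]
  -- step 5 : Cc' mod 2 vanishes
  have hC'gm : red42 Cc' = red42 g * red42 m' := by
    apply mul_left_cancel₀ hrh0
    linear_combination keyr2 - red42 g * hE0
  have hrm'0 : red42 m' = 0 := by
    by_contra hne
    have hC'deg : (red42 Cc').degree < (red42 g).degree := by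
      calc (red42 Cc').degree ≤ Cc'.degree := degree_map_le
        _ ≤ Cc.degree := hCc'deg
        _ < (g.natDegree : WithBot ℕ) := hC
        _ = (red42 g).degree := by rw [degree_eq_natDegree hrg.ne_zero, hrgdeg]
    rw [hC'gm, mul_comm, hrg.degree_mul] at hC'deg
    exact absurd hC'deg (not_lt.mpr (le_add_of_nonneg_left (zero_le_degree_iff.mpr hne)))
  have hrc'0 : red42 Cc' = 0 := by rw [hC'gm, hrm'0, mul_zero]
  obtain ⟨Cc'', hCc'', _⟩ := exists_half Cc' hrc'0
  have hCc0 : Cc = 0 := by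
    rw [hCc', hCc'', show (2 : Polynomial (ZMod 4)) * (2 * Cc'') = 4 * Cc'' by ring,
      fourP0, zero_mul]
  -- step 6 : A vanishes
  have hAb : (X ^ α - 1 : Polynomial (ZMod 2)) ∣ A * b := by
    have := h2
    rw [hCc0, map_zero, zero_mul, add_zero, hE0, zero_mul, add_zero] at this
    exact this
  obtain ⟨u, hu⟩ := hAb
  have hBu : A = B * u := by
    apply mul_left_cancel₀ hb0
    rw [hB] at hu
    linear_combination hu
  have hA0 : A = 0 := by
    apply eq_zero_of_dvd_of_degree_lt ⟨u, hBu⟩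
    rwa [degree_eq_natDegree hBm.ne_zero, hBdeg]
  exact ⟨hA0, hCc0, hE0⟩

lemma polyOfGen_coeff' {R : Type*} [CommRing R] {n : ℕ} (u : Fin n → R) (m : ℕ) :
    (∑ i, C (u i) * X ^ (i : ℕ)).coeff m = if hm : m < n then u ⟨m, hm⟩ else 0 := by
  split
  · exact polyOfGen_coeff u ⟨m, ‹_›⟩
  · refine coeff_eq_zero_of_degree_lt (lt_of_lt_of_le (polyOfGen_degree u) ?_)
    exact_mod_cast Nat.le_of_not_lt ‹_›

lemma red42_polyOf4 {n : ℕ} (u : Fin n → ZMod 4) :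
    red42 (polyOf4 u) = polyOf2 (fun i => c24 (u i)) := by
  ext m
  rw [red42_coeff]
  simp only [polyOf4, polyOf2, polyOfGen_coeff']
  split <;> simp

lemma red42_polyOf4_lift {n : ℕ} (u : Fin n → ZMod 2) :
    red42 (polyOf4 (fun j => lift24 (u j))) = polyOf2 u := by
  rw [red42_polyOf4]
  exact congrArg polyOf2 (funext fun i => c24_lift24 (u i))

lemma two_mul_polyOf4_lift {n : ℕ} (E4 : Polynomial (ZMod 4))
    (hE : E4.degree < (n : WithBot ℕ)) :
    2 * polyOf4 (fun j : Fin n => lift24 (c24 (E4.coeff j))) = 2 * E4 := by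
  ext m
  rw [twoC4, coeff_C_mul, coeff_C_mul]
  simp only [polyOf4, polyOfGen_coeff']
  split
  · exact two_lift _
  · rw [coeff_eq_zero_of_degree_lt (lt_of_lt_of_le hE (by exact_mod_cast Nat.le_of_not_lt ‹_›))]

/-- data parametrizing a codeword -/
abbrev Dom (α : ℕ) (b : Polynomial (ZMod 2)) (g h : Polynomial (ZMod 4)) :=
  (Fin (α - b.natDegree) → ZMod 2) × (Fin g.natDegree → ZMod 4) × (Fin h.natDegree → ZMod 2)

noncomputable def P2map (α : ℕ) (b ℓ : Polynomial (ZMod 2)) (g h : Polynomial (ZMod 4))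
    (d : Dom α b g h) : Polynomial (ZMod 2) :=
  polyOf2 d.1 * b + red42 (polyOf4 d.2.1) * ℓ + polyOf2 d.2.2 * (ℓ * red42 g)

noncomputable def P4map (α : ℕ) (b : Polynomial (ZMod 2)) (f g h : Polynomial (ZMod 4))
    (d : Dom α b g h) : Polynomial (ZMod 4) :=
  polyOf4 d.2.1 * (f * h + 2 * f) + polyOf4 (fun j => lift24 (d.2.2 j)) * (2 * f * g)

noncomputable def Fmap (α β : ℕ) (b ℓ : Polynomial (ZMod 2)) (f g h : Polynomial (ZMod 4))
    (d : Dom α b g h) : (Fin α → ZMod 2) × (Fin β → ZMod 4) :=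
  (fun i => ((P2map α b ℓ g h d) %ₘ (X ^ α - 1)).coeff i,
   fun j => ((P4map α b f g h d) %ₘ (X ^ β - 1)).coeff j)

lemma monicM2 {α : ℕ} (hα : 0 < α) : (X ^ α - 1 : Polynomial (ZMod 2)).Monic := by
  simpa using monic_X_pow_sub_C (1 : ZMod 2) hα.ne'

lemma degM2 {α : ℕ} (hα : 0 < α) :
    (X ^ α - 1 : Polynomial (ZMod 2)).degree = (α : WithBot ℕ) := by
  rw [degree_eq_natDegree (monicM2 hα).ne_zero,
    show (X ^ α - 1 : Polynomial (ZMod 2)) = X ^ α - C 1 by simp, natDegree_X_pow_sub_C]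

lemma monicM4 {β : ℕ} (hβ : 0 < β) : (X ^ β - 1 : Polynomial (ZMod 4)).Monic := by
  simpa using monic_X_pow_sub_C (1 : ZMod 4) hβ.ne'

lemma degM4 {β : ℕ} (hβ : 0 < β) :
    (X ^ β - 1 : Polynomial (ZMod 4)).degree = (β : WithBot ℕ) := by
  haveI : Nontrivial (ZMod 4) := ⟨0, 1, by decide⟩
  rw [degree_eq_natDegree (monicM4 hβ).ne_zero,
    show (X ^ β - 1 : Polynomial (ZMod 4)) = X ^ β - C 1 by simp, natDegree_X_pow_sub_C]

lemma memC_iff {α β : ℕ} (hα : 0 < α) (hβ : Odd β)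
    (f g h : Polynomial (ZMod 4)) (hf : f.Monic) (hg : g.Monic) (hh : h.Monic)
    (hfac : f * h * g = X ^ β - 1)
    (b ℓ : Polynomial (ZMod 2)) (hb : b ∣ X ^ α - 1) (hb0 : b ≠ 0)
    (hdvd : b ∣ red42 (h * g) * ℓ)
    (z : (Fin α → ZMod 2) × (Fin β → ZMod 4)) :
    memC b ℓ (f * h + 2 * f) z ↔ ∃ d : Dom α b g h, z = Fmap α β b ℓ f g h d := by
  haveI : Nontrivial (ZMod 4) := ⟨0, 1, by decide⟩
  have hβ0 : 0 < β := hβ.pos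
  constructor
  · rintro ⟨lam, mu, hz2, hz4⟩
    obtain ⟨A4, Cc, E4, dA, dC, dE, d2, d4⟩ :=
      normalizeRep hα f g h hg hh hfac b ℓ hb hb0 hdvd lam mu
    refine ⟨⟨fun i => c24 (A4.coeff i), fun i => Cc.coeff i, fun i => c24 (E4.coeff i)⟩, ?_⟩
    have p1 : polyOf2 (fun i : Fin (α - b.natDegree) => c24 (A4.coeff i)) = red42 A4 := by
      rw [polyOf2]
      simp_rw [← red42_coeff]
      exact polyOfGen_eq _ (lt_of_le_of_lt degree_map_le dA)
    have p2 : polyOf4 (fun i : Fin g.natDegree => Cc.coeff i) = Cc := polyOfGen_eq _ dC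
    have p3 : polyOf2 (fun i : Fin h.natDegree => c24 (E4.coeff i)) = red42 E4 := by
      rw [polyOf2]
      simp_rw [← red42_coeff]
      exact polyOfGen_eq _ (lt_of_le_of_lt degree_map_le dE)
    have p4 : polyOf4 (fun j : Fin h.natDegree => lift24 (c24 (E4.coeff j))) * (2 * f * g) =
        E4 * (2 * f * g) := by
      have := two_mul_polyOf4_lift E4 dE
      linear_combination (f * g) * this
    have hz1' : polyOf2 z.1 = P2map α b ℓ g h
        ⟨fun i => c24 (A4.coeff i), fun i => Cc.coeff i, fun i => c24 (E4.coeff i)⟩ %ₘ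
        (X ^ α - 1) := by
      apply mod_unique (monicM2 hα)
      · rw [degM2 hα, polyOf2]; exact polyOfGen_degree _
      · have hP : P2map α b ℓ g h ⟨fun i => c24 (A4.coeff i), fun i => Cc.coeff i,
            fun i => c24 (E4.coeff i)⟩ =
            red42 A4 * b + red42 Cc * ℓ + red42 E4 * (ℓ * red42 g) := by
          rw [P2map]
          simp only [p1, p2, p3]
        rw [hP]
        have := dvd_add hz2 d2
        rwa [sub_add_sub_cancel] at this
    have hz2' : polyOf4 z.2 = P4map α b f g h
        ⟨fun i => c24 (A4.coeff i), fun i => Cc.coeff i, fun i => c24 (E4.coeff i)⟩ %ₘ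
        (X ^ β - 1) := by
      apply mod_unique (monicM4 hβ0)
      · rw [degM4 hβ0, polyOf4]; exact polyOfGen_degree _
      · have hP : P4map α b f g h ⟨fun i => c24 (A4.coeff i), fun i => Cc.coeff i,
            fun i => c24 (E4.coeff i)⟩ =
            Cc * (f * h + 2 * f) + E4 * (2 * f * g) := by
          rw [P4map]
          simp only [p2, p4]
        rw [hP]
        have := dvd_add hz4 d4
        rwa [sub_add_sub_cancel] at this
    ext i
    · rw [show z.1 i = (polyOf2 z.1).coeff i from (polyOfGen_coeff z.1 i).symm, hz1']
      rfl
    · rw [show z.2 i = (polyOf4 z.2).coeff i from (polyOfGen_coeff z.2 i).symm, hz2']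
      rfl
  · rintro ⟨d, rfl⟩
    set L := polyOf4 (fun j => lift24 (d.2.2 j)) with hL
    refine ⟨cmap lift24 (polyOf2 d.1), polyOf4 d.2.1 + L * g, ?_, ?_⟩
    · have hpoly : polyOf2 (Fmap α β b ℓ f g h d).1 = P2map α b ℓ g h d %ₘ (X ^ α - 1) := by
        rw [Fmap, polyOf2]
        exact polyOfGen_eq _ (by rw [← degM2 hα]; exact degree_modByMonic_lt _ (monicM2 hα))
      rw [hpoly]
      refine ⟨-(P2map α b ℓ g h d /ₘ (X ^ α - 1)), ?_⟩
      have hmod := modByMonic_add_div (P2map α b ℓ g h d) (X ^ α - 1)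
      have hlam : red42 (cmap lift24 (polyOf2 d.1)) = polyOf2 d.1 := red42_cmap_lift _
      have hmu : red42 (polyOf4 d.2.1 + L * g) =
          red42 (polyOf4 d.2.1) + polyOf2 d.2.2 * red42 g := by
        rw [map_add, map_mul, hL, red42_polyOf4_lift]
      rw [hmu, hlam, P2map] at *
      linear_combination hmod
    · have hpoly : polyOf4 (Fmap α β b ℓ f g h d).2 = P4map α b f g h d %ₘ (X ^ β - 1) := by
        rw [Fmap, polyOf4]
        exact polyOfGen_eq _ (by rw [← degM4 hβ0]; exact degree_modByMonic_lt _ (monicM4 hβ0))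
      rw [hpoly]
      refine ⟨-(P4map α b f g h d /ₘ (X ^ β - 1)) - L, ?_⟩
      have hmod := modByMonic_add_div (P4map α b f g h d) (X ^ β - 1)
      rw [P4map, ← hL] at *
      linear_combination hmod - L * hfac

lemma Fmap_inj {α β : ℕ} (hα : 0 < α) (hβ : Odd β)
    (f g h : Polynomial (ZMod 4)) (hf : f.Monic) (hg : g.Monic) (hh : h.Monic)
    (hfac : f * h * g = X ^ β - 1)
    (b ℓ : Polynomial (ZMod 2)) (hb : b ∣ X ^ α - 1) (hb0 : b ≠ 0) :
    Function.Injective (Fmap α β b ℓ f g h) := by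
  haveI : Nontrivial (ZMod 4) := ⟨0, 1, by decide⟩
  have hβ0 : 0 < β := hβ.pos
  intro d d' hdd
  have h1 : P2map α b ℓ g h d %ₘ (X ^ α - 1) = P2map α b ℓ g h d' %ₘ (X ^ α - 1) := by
    apply eq_of_coeff_eq (n := α) _ _
      (by rw [← degM2 hα]; exact degree_modByMonic_lt _ (monicM2 hα))
      (by rw [← degM2 hα]; exact degree_modByMonic_lt _ (monicM2 hα))
    intro i
    exact congrFun (congrArg Prod.fst hdd) i
  have h2 : P4map α b f g h d %ₘ (X ^ β - 1) = P4map α b f g h d' %ₘ (X ^ β - 1) := by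
    apply eq_of_coeff_eq (n := β) _ _
      (by rw [← degM4 hβ0]; exact degree_modByMonic_lt _ (monicM4 hβ0))
      (by rw [← degM4 hβ0]; exact degree_modByMonic_lt _ (monicM4 hβ0))
    intro i
    exact congrFun (congrArg Prod.snd hdd) i
  have hd2 : (X ^ α - 1 : Polynomial (ZMod 2)) ∣ P2map α b ℓ g h d - P2map α b ℓ g h d' := by
    refine ⟨P2map α b ℓ g h d /ₘ (X ^ α - 1) - P2map α b ℓ g h d' /ₘ (X ^ α - 1), ?_⟩
    have m1 := modByMonic_add_div (P2map α b ℓ g h d) (X ^ α - 1)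
    have m2 := modByMonic_add_div (P2map α b ℓ g h d') (X ^ α - 1)
    linear_combination -m1 + m2 + h1
  have hd4 : (X ^ β - 1 : Polynomial (ZMod 4)) ∣ P4map α b f g h d - P4map α b f g h d' := by
    refine ⟨P4map α b f g h d /ₘ (X ^ β - 1) - P4map α b f g h d' /ₘ (X ^ β - 1), ?_⟩
    have m1 := modByMonic_add_div (P4map α b f g h d) (X ^ β - 1)
    have m2 := modByMonic_add_div (P4map α b f g h d') (X ^ β - 1)
    linear_combination -m1 + m2 + h2
  set A := polyOf2 d.1 - polyOf2 d'.1 with hA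
  set Cc := polyOf4 d.2.1 - polyOf4 d'.2.1 with hCc
  set E4 := polyOf4 (fun j => lift24 (d.2.2 j)) - polyOf4 (fun j => lift24 (d'.2.2 j)) with hE4
  have hAd : A.degree < ((α - b.natDegree : ℕ) : WithBot ℕ) := by
    apply lt_of_le_of_lt (degree_sub_le _ _)
    rw [polyOf2, polyOf2]
    exact max_lt (polyOfGen_degree _) (polyOfGen_degree _)
  have hCd : Cc.degree < (g.natDegree : WithBot ℕ) := by
    apply lt_of_le_of_lt (degree_sub_le _ _)
    rw [polyOf4, polyOf4]
    exact max_lt (polyOfGen_degree _) (polyOfGen_degree _)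
  have hEd : E4.degree < (h.natDegree : WithBot ℕ) := by
    apply lt_of_le_of_lt (degree_sub_le _ _)
    rw [polyOf4, polyOf4]
    exact max_lt (polyOfGen_degree _) (polyOfGen_degree _)
  have hred : red42 E4 = polyOf2 d.2.2 - polyOf2 d'.2.2 := by
    rw [hE4, map_sub, red42_polyOf4_lift, red42_polyOf4_lift]
  have hcond2 : (X ^ α - 1 : Polynomial (ZMod 2)) ∣
      (A * b + red42 Cc * ℓ + red42 E4 * (ℓ * red42 g)) := by
    have heq : A * b + red42 Cc * ℓ + red42 E4 * (ℓ * red42 g) =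
        P2map α b ℓ g h d - P2map α b ℓ g h d' := by
      rw [hA, hCc, map_sub, hred, P2map, P2map]
      ring
    rw [heq]; exact hd2
  have hcond4 : (X ^ β - 1 : Polynomial (ZMod 4)) ∣
      (Cc * (f * h + 2 * f) + E4 * (2 * f * g)) := by
    have heq : Cc * (f * h + 2 * f) + E4 * (2 * f * g) =
        P4map α b f g h d - P4map α b f g h d' := by
      rw [hCc, hE4, P4map, P4map]
      ring
    rw [heq]; exact hd4
  obtain ⟨hA0, hC0, hE0⟩ := injRep hα hβ f g h hf hg hh hfac b ℓ hb hb0 A Cc E4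
    hAd hCd hEd hcond2 hcond4
  have e1 : d.1 = d'.1 := by
    have hpe := sub_eq_zero.mp hA0
    rw [polyOf2, polyOf2] at hpe
    funext i
    rw [← polyOfGen_coeff d.1 i, ← polyOfGen_coeff d'.1 i, hpe]
  have e2 : d.2.1 = d'.2.1 := by
    have hpe := sub_eq_zero.mp hC0
    rw [polyOf4, polyOf4] at hpe
    funext i
    rw [← polyOfGen_coeff d.2.1 i, ← polyOfGen_coeff d'.2.1 i, hpe]
  have e3 : d.2.2 = d'.2.2 := by
    rw [hred] at hE0
    have hpe := sub_eq_zero.mp hE0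
    rw [polyOf2, polyOf2] at hpe
    funext i
    rw [← polyOfGen_coeff d.2.2 i, ← polyOfGen_coeff d'.2.2 i, hpe]
  exact Prod.ext e1 (Prod.ext e2 e3)

/-- The sets `S₁ = {xⁱ⋆(b|0)}_{i<α-deg b}`, `S₂ = {xⁱ⋆(ℓ|fh+2f)}_{i<deg g}`,
`S₃ = {xⁱ⋆(ℓg|2fg)}_{i<deg h}` span `C` as a `Z₄`-module; moreover
`|C| = 2^{α-deg b}·4^{deg g}·2^{deg h}`. -/
theorem spanning_set_and_card (α β : ℕ) (hα : 0 < α) (hβ : Odd β)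
    (f g h : Polynomial (ZMod 4)) (hf : f.Monic) (hg : g.Monic) (hh : h.Monic)
    (hfac : f * h * g = X ^ β - 1)
    (b ℓ : Polynomial (ZMod 2)) (hb : b ∣ X ^ α - 1) (hℓ : ℓ.degree < b.degree)
    (hdvd : b ∣ red42 (h * g) * ℓ) :
    (∀ z : (Fin α → ZMod 2) × (Fin β → ZMod 4),
      memC b ℓ (f * h + 2 * f) z →
        ∃ (a : Fin (α - b.natDegree) → ZMod 4) (c : Fin g.natDegree → ZMod 4)
          (e : Fin h.natDegree → ZMod 4),
          (X ^ α - 1 : Polynomial (ZMod 2)) ∣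
              polyOf2 z.1 -
                (red42 (∑ i, C (a i) * X ^ (i : ℕ)) * b +
                 red42 (∑ i, C (c i) * X ^ (i : ℕ)) * ℓ +
                 red42 (∑ i, C (e i) * X ^ (i : ℕ)) * (ℓ * red42 g)) ∧
          (X ^ β - 1 : Polynomial (ZMod 4)) ∣
              polyOf4 z.2 -
                ((∑ i, C (c i) * X ^ (i : ℕ)) * (f * h + 2 * f) +
                 (∑ i, C (e i) * X ^ (i : ℕ)) * (2 * f * g))) ∧
    Nat.card {z : (Fin α → ZMod 2) × (Fin β → ZMod 4) //
        memC b ℓ (f * h + 2 * f) z} =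
      2 ^ (α - b.natDegree) * 4 ^ g.natDegree * 2 ^ h.natDegree := by
  haveI : Nontrivial (ZMod 4) := ⟨0, 1, by decide⟩
  have hb0 : b ≠ 0 := by
    rintro rfl
    simp only [degree_zero] at hℓ
    exact not_lt_bot hℓ
  constructor
  · rintro z ⟨lam, mu, hz2, hz4⟩
    obtain ⟨A4, Cc, E4, dA, dC, dE, d2, d4⟩ :=
      normalizeRep hα f g h hg hh hfac b ℓ hb hb0 hdvd lam mu
    refine ⟨fun i => A4.coeff i, fun i => Cc.coeff i, fun i => E4.coeff i, ?_, ?_⟩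
    · rw [show (∑ i : Fin (α - b.natDegree), C (A4.coeff (i : ℕ)) * X ^ (i : ℕ)) = A4 from
          polyOfGen_eq A4 dA,
        show (∑ i : Fin g.natDegree, C (Cc.coeff (i : ℕ)) * X ^ (i : ℕ)) = Cc from
          polyOfGen_eq Cc dC,
        show (∑ i : Fin h.natDegree, C (E4.coeff (i : ℕ)) * X ^ (i : ℕ)) = E4 from
          polyOfGen_eq E4 dE]
      have hsum := dvd_add hz2 d2
      rwa [sub_add_sub_cancel] at hsum
    · rw [show (∑ i : Fin g.natDegree, C (Cc.coeff (i : ℕ)) * X ^ (i : ℕ)) = Cc from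
          polyOfGen_eq Cc dC,
        show (∑ i : Fin h.natDegree, C (E4.coeff (i : ℕ)) * X ^ (i : ℕ)) = E4 from
          polyOfGen_eq E4 dE]
      have hsum := dvd_add hz4 d4
      rwa [sub_add_sub_cancel] at hsum
  · have hmem : ∀ z, memC b ℓ (f * h + 2 * f) z ↔ ∃ d, z = Fmap α β b ℓ f g h d :=
      memC_iff hα hβ f g h hf hg hh hfac b ℓ hb hb0 hdvd
    have hbij : Function.Bijective (fun d : Dom α b g h =>
        (⟨Fmap α β b ℓ f g h d, (hmem _).mpr ⟨d, rfl⟩⟩ :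
          {z // memC b ℓ (f * h + 2 * f) z})) := by
      constructor
      · intro d d' hdd
        exact Fmap_inj hα hβ f g h hf hg hh hfac b ℓ hb hb0 (congrArg Subtype.val hdd)
      · rintro ⟨z, hz⟩
        obtain ⟨d, rfl⟩ := (hmem z).mp hz
        exact ⟨d, rfl⟩
    rw [← Nat.card_congr (Equiv.ofBijective _ hbij), Nat.card_eq_fintype_card]
    rw [Fintype.card_prod, Fintype.card_prod, Fintype.card_fun, Fintype.card_fun,
      Fintype.card_fun, ZMod.card, ZMod.card, Fintype.card_fin, Fintype.card_fin,
      Fintype.card_fin]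
    ring
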